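/- arXiv:1506.04963 — 2 statements merged into one kernel-verified Lean document; each statement's English description precedes it below -/
import Mathlib

section
/- (Jacobi triple product, shifted form) For r ∈ ℚ with r ≠ 1/2, |q| < 1, z ≠ 0: ∑_{m ∈ ℤ+r} q^{m²/2} z^m = z^r q^{r²/2} ∏_{m>0} (1 - q^m)(1 + z q^{m+r-1/2})(1 + z^{-1} q^{m-r-1/2}), provided both sides converge absolutely (e.g. −1/2 < r < 1/2). -/
open Finset Filter Topology

namespace JTP

/-- q-factorial-like product `∏_{i=1}^n (1 - q^i)`. -/
noncomputable def F (q : ℂ) (n : ℕ) : ℂ := ∏ i ∈ Finset.range n, (1 - q ^ (i + 1))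

lemma F_succ (q : ℂ) (n : ℕ) : F q (n + 1) = F q n * (1 - q ^ (n + 1)) := by
  simp [F, Finset.prod_range_succ]

lemma one_sub_pow_ne_zero {q : ℂ} (hq : ‖q‖ < 1) (n : ℕ) : 1 - q ^ (n + 1) ≠ 0 := by
  intro h
  have h1 : q ^ (n + 1) = 1 := by linear_combination -h
  have : ‖q ^ (n + 1)‖ < 1 := by
    rw [norm_pow]
    exact pow_lt_one₀ (norm_nonneg q) hq (Nat.succ_ne_zero n)
  rw [h1, norm_one] at this
  exact lt_irrefl _ this

lemma F_ne_zero {q : ℂ} (hq : ‖q‖ < 1) (n : ℕ) : F q n ≠ 0 :=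
  Finset.prod_ne_zero_iff.2 fun i _ => one_sub_pow_ne_zero hq i

/-- Gaussian binomial coefficient (as a complex number). -/
noncomputable def B (q : ℂ) (n k : ℕ) : ℂ := F q n / (F q k * F q (n - k))

lemma B_zero' {q : ℂ} (hq : ‖q‖ < 1) (n : ℕ) : B q n 0 = 1 := by
  simp [B, F, div_self (F_ne_zero hq n)]
  exact F_ne_zero hq n

lemma B_self {q : ℂ} (hq : ‖q‖ < 1) (n : ℕ) : B q n n = 1 := by
  simp [B, F]
  exact F_ne_zero hq n

/-- q-Pascal recurrence. -/
lemma B_pascal {q : ℂ} (hq : ‖q‖ < 1) (j m : ℕ) :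
    B q (j + m + 2) (j + 1) = B q (j + m + 1) (j + 1) + q ^ (m + 1) * B q (j + m + 1) j := by
  have h1 : j + m + 2 - (j + 1) = m + 1 := by omega
  have h2 : j + m + 1 - (j + 1) = m := by omega
  have h3 : j + m + 1 - j = m + 1 := by omega
  rw [B, B, B, h1, h2, h3]
  have e1 : F q (j + m + 2) = F q (j + m + 1) * (1 - q ^ (j + m + 2)) := F_succ q (j + m + 1)
  have e2 : F q (j + 1) = F q j * (1 - q ^ (j + 1)) := F_succ q j
  have e3 : F q (m + 1) = F q m * (1 - q ^ (m + 1)) := F_succ q m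
  rw [e1, e2, e3]
  have hFj := F_ne_zero hq j
  have hFm := F_ne_zero hq m
  have hFjm := F_ne_zero hq (j + m + 1)
  have hj1 := one_sub_pow_ne_zero hq j
  have hm1 := one_sub_pow_ne_zero hq m
  field_simp
  ring

/-- Gaussian binomial theorem. -/
theorem gbt (hq : ‖q‖ < 1) (x : ℂ) (N : ℕ) :
    ∏ j ∈ range N, (1 + x * q ^ j) =
      ∑ k ∈ range (N + 1), q ^ (k.choose 2) * B q N k * x ^ k := by
  induction N with
  | zero => simp [B_self hq 0]
  | succ N ih =>
    rw [prod_range_succ, ih]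
    set f : ℕ → ℂ := fun k => q ^ (k.choose 2) * B q N k * x ^ k with hf
    -- RHS: peel top and bottom, rewrite middle via Pascal
    rw [sum_range_succ (n := N + 1), B_self hq (N + 1)]
    rw [sum_range_succ' (f := fun k => q ^ (k.choose 2) * B q (N + 1) k * x ^ k) N]
    rw [B_zero' hq (N + 1)]
    have key : ∀ k ∈ range N,
        q ^ ((k + 1).choose 2) * B q (N + 1) (k + 1) * x ^ (k + 1)
          = f (k + 1) + f k * (x * q ^ N) := by
      intro k hk
      rw [mem_range] at hk
      obtain ⟨m, hm⟩ : ∃ m, N = k + m + 1 := ⟨N - k - 1, by omega⟩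
      subst hm
      rw [hf]
      simp only
      rw [B_pascal hq k m]
      have hch : (k + 1).choose 2 = k.choose 2 + k := by
        rw [Nat.choose_succ_succ]
        simp [Nat.choose_one_right, Nat.add_comm]
      rw [hch]
      ring
    rw [sum_congr rfl key, sum_add_distrib, ← sum_mul]
    have hbot : (∑ k ∈ range (N + 1), f k) = (∑ k ∈ range N, f (k + 1)) + f 0 :=
      sum_range_succ' f N
    have htop : (∑ k ∈ range (N + 1), f k) = (∑ k ∈ range N, f k) + f N :=
      sum_range_succ f N
    have hf0 : f 0 = 1 := by simp [hf, B_zero' hq N]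
    have hfN : f N = q ^ (N.choose 2) * x ^ N := by simp [hf, B_self hq N]
    have hchN : (N + 1).choose 2 = N.choose 2 + N := by
      rw [Nat.choose_succ_succ]
      simp [Nat.choose_one_right, Nat.add_comm]
    rw [hchN, mul_add, mul_one]
    nth_rewrite 1 [hbot]
    nth_rewrite 1 [htop]
    rw [hf0, hfN, pow_add, show Nat.choose 0 2 = 0 from rfl]
    ring

lemma sum_odd_sub (n : ℕ) : ∑ j ∈ range n, (2 * (j : ℤ) + 1 - 2 * n) = -(n : ℤ) ^ 2 := by
  induction n with
  | zero => simp
  | succ n ih =>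
    rw [sum_range_succ]
    push_cast
    have : ∑ j ∈ range n, (2 * (j : ℤ) + 1 - 2 * ((n : ℤ) + 1))
        = ∑ j ∈ range n, (2 * (j : ℤ) + 1 - 2 * n) + ∑ j ∈ range n, (-2) := by
      rw [← sum_add_distrib]; apply sum_congr rfl; intros; ring
    rw [this, ih]
    simp
    ring

lemma choose_two (k : ℕ) : 2 * ((k.choose 2 : ℤ)) = (k : ℤ) ^ 2 - k := by
  induction k with
  | zero => simp
  | succ k ih =>
    rw [Nat.choose_succ_succ, Nat.choose_one_right]
    push_cast
    push_cast at ih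
    linarith


/-- Finite Jacobi triple product. -/
theorem fjtp (hp : ‖p‖ < 1) (hp0 : p ≠ 0) (hu : u ≠ 0) (n : ℕ) :
    (∏ i ∈ range n, ((1 + u * p ^ (2 * i + 1)) * (1 + u⁻¹ * p ^ (2 * i + 1))))
      = ∑ k ∈ range (2 * n + 1),
          B (p ^ 2) (2 * n) k * (p ^ (((k : ℤ) - n) ^ 2) * u ^ ((k : ℤ) - n)) := by
  have hq : ‖p ^ 2‖ < 1 := by
    rw [norm_pow]
    exact pow_lt_one₀ (norm_nonneg p) hp two_ne_zero
  have key := gbt hq (u * p ^ ((1 : ℤ) - 2 * n)) (2 * n)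
  -- LHS of key: split the product
  have hsplit : ∏ j ∈ range (2 * n), (1 + u * p ^ ((1 : ℤ) - 2 * n) * (p ^ 2) ^ j)
      = (∏ j ∈ range n, (1 + u * p ^ ((1 : ℤ) - 2 * n) * (p ^ 2) ^ j))
        * ∏ j ∈ range n, (1 + u * p ^ ((1 : ℤ) - 2 * n) * (p ^ 2) ^ (n + j)) := by
    rw [two_mul, Finset.prod_range_add]
  -- second half: factors 1 + u p^{2j+1}
  have hsecond : ∀ j : ℕ, 1 + u * p ^ ((1 : ℤ) - 2 * n) * (p ^ 2) ^ (n + j)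
      = 1 + u * p ^ (2 * j + 1) := by
    intro j
    congr 1
    rw [mul_assoc]
    congr 1
    rw [← zpow_natCast (p ^ 2) (n + j), ← zpow_natCast p (2 * j + 1), ← zpow_ofNat p 2,
      ← zpow_mul, ← zpow_add₀ hp0]
    congr 1
    push_cast
    ring
  -- first half: factor out u * p^{2j+1-2n}
  have hpow : ∀ (a : ℤ) (m : ℕ), p ^ a * (p ^ 2) ^ m = p ^ (a + 2 * m) := by
    intro a m
    rw [← zpow_natCast (p ^ 2) m, ← zpow_ofNat p 2, ← zpow_mul, ← zpow_add₀ hp0]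
  have hfirst : ∀ j ∈ range n, 1 + u * p ^ ((1 : ℤ) - 2 * n) * (p ^ 2) ^ j
      = (u * p ^ (2 * (j : ℤ) + 1 - 2 * n)) * (1 + u⁻¹ * p ^ (2 * (n - 1 - j) + 1)) := by
    intro j hj
    rw [mem_range] at hj
    have he : p ^ (2 * (n - 1 - j) + 1 : ℕ) = p ^ (2 * (n : ℤ) - 2 * j - 1) := by
      rw [← zpow_natCast p (2 * (n - 1 - j) + 1)]
      congr 1
      push_cast [Nat.sub_sub]
      omega
    rw [he, mul_assoc u, hpow]
    have h1 : (u * p ^ (2 * (j : ℤ) + 1 - 2 * n)) * (u⁻¹ * p ^ (2 * (n : ℤ) - 2 * j - 1)) = 1 := by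
      rw [mul_mul_mul_comm, mul_inv_cancel₀ hu, ← zpow_add₀ hp0]
      rw [show (2 * (j : ℤ) + 1 - 2 * n) + (2 * (n : ℤ) - 2 * j - 1) = 0 by ring]
      simp
    rw [mul_add, mul_one, h1]
    rw [show (1 : ℤ) - 2 * n + 2 * j = 2 * (j : ℤ) + 1 - 2 * n by ring, add_comm]
  have zpow_sum_range : ∀ (e : ℕ → ℤ) (m : ℕ),
      p ^ (∑ j ∈ range m, e j) = ∏ j ∈ range m, p ^ e j := by
    intro e m
    induction m with
    | zero => simp
    | succ m ih => rw [sum_range_succ, prod_range_succ, zpow_add₀ hp0, ih]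
  have hconst : ∏ j ∈ range n, (u * p ^ (2 * (j : ℤ) + 1 - 2 * n))
      = u ^ n * p ^ (-(n : ℤ) ^ 2) := by
    rw [prod_mul_distrib, prod_const, ← sum_odd_sub n, zpow_sum_range]
    simp
  have hterm : ∀ k ∈ range (2 * n + 1),
      (p ^ 2) ^ (k.choose 2) * B (p ^ 2) (2 * n) k * (u * p ^ ((1 : ℤ) - 2 * n)) ^ k
        = (u ^ n * p ^ (-(n : ℤ) ^ 2))
          * (B (p ^ 2) (2 * n) k * (p ^ (((k : ℤ) - n) ^ 2) * u ^ ((k : ℤ) - n))) := by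
    intro k _
    have h1 : (p ^ 2) ^ (k.choose 2) * (p ^ ((1 : ℤ) - 2 * n)) ^ k
        = p ^ (-(n : ℤ) ^ 2) * p ^ (((k : ℤ) - n) ^ 2) := by
      rw [← zpow_natCast (p ^ ((1 : ℤ) - 2 * n)) k, ← zpow_mul,
        ← zpow_natCast (p ^ 2) (k.choose 2), ← zpow_ofNat p 2, ← zpow_mul,
        ← zpow_add₀ hp0, ← zpow_add₀ hp0]
      congr 1
      linear_combination choose_two k
    rw [mul_pow, ← zpow_natCast u k, ← zpow_natCast u n]
    rw [show u ^ (k : ℤ) = u ^ ((n : ℕ) : ℤ) * u ^ ((k : ℤ) - n) by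
      rw [← zpow_add₀ hu]; congr 1; ring]
    linear_combination (B (p ^ 2) (2 * n) k * u ^ ((n : ℕ) : ℤ) * u ^ ((k : ℤ) - n)) * h1
  have e1 : (∏ j ∈ range n, (1 + u * p ^ ((1 : ℤ) - 2 * n) * (p ^ 2) ^ (n + j)))
      = ∏ j ∈ range n, (1 + u * p ^ (2 * j + 1)) :=
    prod_congr rfl fun j _ => hsecond j
  have e2 : (∏ j ∈ range n, (1 + u * p ^ ((1 : ℤ) - 2 * n) * (p ^ 2) ^ j))
      = (u ^ n * p ^ (-(n : ℤ) ^ 2)) * ∏ j ∈ range n, (1 + u⁻¹ * p ^ (2 * j + 1)) := by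
    rw [prod_congr rfl hfirst, prod_mul_distrib, hconst]
    congr 1
    exact prod_range_reflect (fun j => 1 + u⁻¹ * p ^ (2 * j + 1)) n
  have e3 : (∑ k ∈ range (2 * n + 1),
        (p ^ 2) ^ (k.choose 2) * B (p ^ 2) (2 * n) k * (u * p ^ ((1 : ℤ) - 2 * n)) ^ k)
      = (u ^ n * p ^ (-(n : ℤ) ^ 2)) * ∑ k ∈ range (2 * n + 1),
          B (p ^ 2) (2 * n) k * (p ^ (((k : ℤ) - n) ^ 2) * u ^ ((k : ℤ) - n)) := by
    rw [mul_sum]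
    exact sum_congr rfl hterm
  have h4 := key
  rw [hsplit, e1, e2, e3] at h4
  have hc : (u ^ n * p ^ (-(n : ℤ) ^ 2)) ≠ 0 :=
    mul_ne_zero (pow_ne_zero _ hu) (zpow_ne_zero _ hp0)
  rw [prod_mul_distrib]
  apply mul_left_cancel₀ hc
  calc (u ^ n * p ^ (-(n : ℤ) ^ 2)) *
        ((∏ i ∈ range n, (1 + u * p ^ (2 * i + 1))) * ∏ i ∈ range n, (1 + u⁻¹ * p ^ (2 * i + 1)))
      = ((u ^ n * p ^ (-(n : ℤ) ^ 2)) * ∏ j ∈ range n, (1 + u⁻¹ * p ^ (2 * j + 1)))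
          * ∏ j ∈ range n, (1 + u * p ^ (2 * j + 1)) := by ring
    _ = _ := h4

/-- A product with a zero factor has prod 0. -/
lemma hasProd_zero_of_exists {f : ℕ → ℂ} (h : ∃ n, f n = 0) : HasProd f 0 := by
  obtain ⟨n, hn⟩ := h
  have : (fun s : Finset ℕ => ∏ i ∈ s, f i) =ᶠ[atTop] (fun _ => 0) := by
    filter_upwards [eventually_ge_atTop {n}] with s hs
    exact Finset.prod_eq_zero (hs (Finset.mem_singleton_self n)) hn
  exact (tendsto_congr' this).2 tendsto_const_nhds

lemma multipliable_one_add {f : ℕ → ℂ} (hf : Summable f) : Multipliable fun n => 1 + f n := by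
  by_cases h : ∃ n, (1 : ℂ) + f n = 0
  · exact ⟨0, hasProd_zero_of_exists h⟩
  push_neg at h
  have hlog : Summable fun n => Complex.log (1 + f n) := by
    have hev : ∀ᶠ n in cofinite, ‖Complex.log (1 + f n)‖ ≤ (3/2) * ‖f n‖ := by
      rw [Nat.cofinite_eq_atTop]
      have h0 : Tendsto (fun n => ‖f n‖) atTop (𝓝 0) := by
        simpa using hf.tendsto_atTop_zero.norm
      filter_upwards [h0.eventually_le_const (by norm_num : (0:ℝ) < 1/2)] with n hn
      exact Complex.norm_log_one_add_half_le_self hn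
    exact Summable.of_norm_bounded_eventually (hf.norm.mul_left (3/2)) hev
  exact Complex.multipliable_of_summable_log hlog

lemma exp_neg_two_le {x : ℝ} (h0 : 0 ≤ x) (h2 : x ≤ 1/2) : Real.exp (-(2*x)) ≤ 1 - x := by
  have h1 : 1 + 2*x ≤ Real.exp (2*x) := by
    have := Real.add_one_le_exp (2*x); linarith
  have hpos : (0:ℝ) < 1 + 2*x := by linarith
  have hexp : (0:ℝ) < Real.exp (2*x) := Real.exp_pos _
  rw [Real.exp_neg]
  have i1 : (Real.exp (2*x))⁻¹ ≤ (1 + 2*x)⁻¹ := by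
    apply inv_anti₀ hpos h1
  apply le_trans i1
  rw [inv_le_iff_one_le_mul₀ hpos]
  nlinarith

/-- Uniform positive lower bound for the partial products `∏ (1 - s^(i+1))`. -/
lemma prod_one_sub_lower {s : ℝ} (h0 : 0 ≤ s) (h1 : s < 1) :
    ∃ d > 0, ∀ n, d ≤ ∏ i ∈ range n, (1 - s ^ (i + 1)) := by
  have hsum : Summable (fun i : ℕ => s ^ (i + 1)) :=
    (summable_geometric_of_lt_one h0 h1).comp_injective (add_left_injective 1)
  have hfac : ∀ i : ℕ, 0 < 1 - s ^ (i + 1) := fun i => by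
    have : s ^ (i + 1) < 1 := pow_lt_one₀ h0 h1 (Nat.succ_ne_zero i)
    linarith
  have hfac1 : ∀ i : ℕ, 1 - s ^ (i + 1) ≤ 1 := fun i => by
    have : 0 ≤ s ^ (i + 1) := pow_nonneg h0 _
    linarith
  obtain ⟨K, hK⟩ : ∃ K, ∀ i ≥ K, s ^ (i + 1) ≤ 1/2 := by
    have ht : Tendsto (fun i : ℕ => s ^ (i + 1)) atTop (𝓝 0) := hsum.tendsto_atTop_zero
    exact (ht.eventually_le_const (by norm_num : (0:ℝ) < 1/2)).exists_forall_of_atTop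
  set T : ℝ := ∑' i : ℕ, s ^ (i + 1) with hT
  have hT0 : 0 ≤ T := tsum_nonneg fun i => pow_nonneg h0 _
  refine ⟨(∏ i ∈ range K, (1 - s ^ (i + 1))) * Real.exp (-(2*T)), ?_, ?_⟩
  · exact mul_pos (prod_pos fun i _ => hfac i) (Real.exp_pos _)
  intro n
  rcases le_or_gt n K with h | h
  · have mono : (∏ i ∈ range K, (1 - s ^ (i + 1))) ≤ ∏ i ∈ range n, (1 - s ^ (i + 1)) := by
      rw [← prod_range_mul_prod_Ico _ h]
      have : (∏ i ∈ Ico n K, (1 - s ^ (i + 1))) ≤ 1 :=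
        prod_le_one (fun i _ => (hfac i).le) (fun i _ => hfac1 i)
      nlinarith [prod_pos (fun i (_ : i ∈ range n) => hfac i), this,
        prod_pos (fun i (_ : i ∈ Ico n K) => hfac i)]
    have : Real.exp (-(2*T)) ≤ 1 := Real.exp_le_one_iff.2 (by linarith)
    nlinarith [prod_pos (fun i (_ : i ∈ range K) => hfac i)]
  · rw [← prod_range_mul_prod_Ico _ h.le]
    have key : Real.exp (-(2*T)) ≤ ∏ i ∈ Ico K n, (1 - s ^ (i + 1)) := by
      have step1 : Real.exp (-(2 * ∑ i ∈ Ico K n, s ^ (i + 1)))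
          ≤ ∏ i ∈ Ico K n, (1 - s ^ (i + 1)) := by
        rw [mul_sum, ← sum_neg_distrib, Real.exp_sum]
        exact prod_le_prod (fun i _ => (Real.exp_pos _).le)
          (fun i hi => exp_neg_two_le (pow_nonneg h0 _) (hK i (mem_Ico.1 hi).1))
      refine le_trans ?_ step1
      apply Real.exp_le_exp.2
      have : (∑ i ∈ Ico K n, s ^ (i + 1)) ≤ T :=
        Summable.sum_le_tsum _ (fun i _ => pow_nonneg h0 _) hsum
      linarith
    exact mul_le_mul_of_nonneg_left key (prod_pos fun i _ => hfac i).le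

lemma summable_geom_succ {q : ℂ} (hq : ‖q‖ < 1) : Summable (fun i : ℕ => q ^ (i + 1)) :=
  (summable_geometric_of_norm_lt_one hq).comp_injective (add_left_injective 1)

lemma multipliable_F {q : ℂ} (hq : ‖q‖ < 1) : Multipliable (fun i : ℕ => 1 - q ^ (i + 1)) := by
  have := multipliable_one_add (f := fun i : ℕ => -(q ^ (i + 1))) (summable_geom_succ hq).neg
  exact this.congr fun i => by rw [← sub_eq_add_neg]

lemma tendsto_F {q : ℂ} (hq : ‖q‖ < 1) :
    Tendsto (F q) atTop (𝓝 (∏' i : ℕ, (1 - q ^ (i + 1)))) :=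
  (multipliable_F hq).hasProd.tendsto_prod_nat

lemma norm_F_le {q : ℂ} (hq : ‖q‖ < 1) (n : ℕ) :
    ‖F q n‖ ≤ Real.exp (∑' i : ℕ, ‖q‖ ^ (i + 1)) := by
  have hsum : Summable (fun i : ℕ => ‖q‖ ^ (i + 1)) :=
    (summable_geometric_of_lt_one (norm_nonneg q) hq).comp_injective (add_left_injective 1)
  rw [F, norm_prod]
  calc ∏ i ∈ range n, ‖1 - q ^ (i + 1)‖
      ≤ ∏ i ∈ range n, Real.exp (‖q‖ ^ (i + 1)) := by
        apply prod_le_prod (fun i _ => norm_nonneg _)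
        intro i _
        calc ‖1 - q ^ (i + 1)‖ ≤ ‖(1 : ℂ)‖ + ‖q ^ (i + 1)‖ := norm_sub_le _ _
          _ = 1 + ‖q‖ ^ (i + 1) := by rw [norm_one, norm_pow]
          _ ≤ Real.exp (‖q‖ ^ (i + 1)) := by
              have := Real.add_one_le_exp (‖q‖ ^ (i + 1)); linarith
    _ = Real.exp (∑ i ∈ range n, ‖q‖ ^ (i + 1)) := (Real.exp_sum _ _).symm
    _ ≤ Real.exp (∑' i : ℕ, ‖q‖ ^ (i + 1)) := by
        apply Real.exp_le_exp.2
        exact Summable.sum_le_tsum _ (fun i _ => pow_nonneg (norm_nonneg q) _) hsum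

lemma norm_F_ge {q : ℂ} (hq : ‖q‖ < 1) : ∃ d > 0, ∀ n, d ≤ ‖F q n‖ := by
  obtain ⟨d, hd, hdn⟩ := prod_one_sub_lower (norm_nonneg q) hq
  refine ⟨d, hd, fun n => (hdn n).trans ?_⟩
  rw [F, norm_prod]
  apply Finset.prod_le_prod
  · intro i _
    have : ‖q‖ ^ (i + 1) < 1 := pow_lt_one₀ (norm_nonneg q) hq (Nat.succ_ne_zero i)
    linarith
  · intro i _
    calc 1 - ‖q‖ ^ (i + 1) = ‖(1:ℂ)‖ - ‖q ^ (i + 1)‖ := by rw [norm_one, norm_pow]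
      _ ≤ ‖1 - q ^ (i + 1)‖ := norm_sub_norm_le _ _

lemma norm_Finf_ge {q : ℂ} (hq : ‖q‖ < 1) : ∃ d > 0, d ≤ ‖∏' i : ℕ, (1 - q ^ (i + 1))‖ := by
  obtain ⟨d, hd, hdn⟩ := norm_F_ge hq
  exact ⟨d, hd, ge_of_tendsto' ((tendsto_F hq).norm) hdn⟩

lemma Finf_ne_zero {q : ℂ} (hq : ‖q‖ < 1) : (∏' i : ℕ, (1 - q ^ (i + 1))) ≠ 0 := by
  obtain ⟨d, hd, hdn⟩ := norm_Finf_ge hq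
  intro h
  rw [h, norm_zero] at hdn
  linarith

lemma norm_B_le {q : ℂ} (hq : ‖q‖ < 1) : ∃ C : ℝ, 0 ≤ C ∧ ∀ n k : ℕ, ‖B q n k‖ ≤ C := by
  obtain ⟨d, hd, hdn⟩ := norm_F_ge hq
  refine ⟨Real.exp (∑' i : ℕ, ‖q‖ ^ (i + 1)) / (d * d), by positivity, fun n k => ?_⟩
  rw [B, norm_div, norm_mul]
  apply div_le_div₀ (by positivity) (norm_F_le hq n) (by positivity)
  exact mul_le_mul (hdn k) (hdn (n - k)) hd.le (norm_nonneg _)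

/-- Pointwise limit of the renormalized Gaussian binomials. -/
lemma tendsto_FinfB {q : ℂ} (hq : ‖q‖ < 1) (j : ℤ) :
    Tendsto (fun n : ℕ => (∏' i : ℕ, (1 - q ^ (i + 1))) * B q (2 * n) ((j + n).toNat))
      atTop (𝓝 1) := by
  set Finf := ∏' i : ℕ, (1 - q ^ (i + 1)) with hFinf
  have hF0 := Finf_ne_zero hq
  have t1 : Tendsto (fun n : ℕ => F q (2 * n)) atTop (𝓝 Finf) :=
    (tendsto_F hq).comp (tendsto_atTop_mono (f := id) (fun n => by simp; omega) tendsto_id)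
  have t2 : Tendsto (fun n : ℕ => F q ((j + n).toNat)) atTop (𝓝 Finf) := by
    apply (tendsto_F hq).comp
    apply tendsto_atTop_mono (f := fun n : ℕ => n - j.natAbs)
    · intro n; omega
    · exact tendsto_sub_atTop_nat _
  have t3 : Tendsto (fun n : ℕ => F q (2 * n - (j + n).toNat)) atTop (𝓝 Finf) := by
    apply (tendsto_F hq).comp
    apply tendsto_atTop_mono (f := fun n : ℕ => n - j.natAbs)
    · intro n; omega
    · exact tendsto_sub_atTop_nat _
  have tq : Tendsto (fun n : ℕ => Finf * (F q (2 * n) / (F q ((j + n).toNat) * F q (2 * n - (j + n).toNat))))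
      atTop (𝓝 (Finf * (Finf / (Finf * Finf)))) :=
    tendsto_const_nhds.mul (t1.div (t2.mul t3) (mul_ne_zero hF0 hF0))
  have : Finf * (Finf / (Finf * Finf)) = 1 := by field_simp; exact div_self hF0
  rw [this] at tq
  exact tq.congr fun n => by rw [B]

/-- Summability of `r^(k²) M^k` on ℕ for `0 ≤ r < 1`, `0 ≤ M`. -/
lemma summable_rsq_nat {r M : ℝ} (hr0 : 0 ≤ r) (hr1 : r < 1) (hM : 0 ≤ M) :
    Summable (fun k : ℕ => r ^ (k ^ 2) * M ^ k) := by
  obtain ⟨K, hK⟩ : ∃ K, r ^ K * M ≤ 1/2 := by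
    have ht : Tendsto (fun k : ℕ => r ^ k * M) atTop (𝓝 (0 * M)) :=
      (tendsto_pow_atTop_nhds_zero_of_lt_one hr0 hr1).mul_const M
    rw [zero_mul] at ht
    exact (ht.eventually_le_const (by norm_num : (0:ℝ) < 1/2)).exists
  rw [← summable_nat_add_iff K]
  refine Summable.of_nonneg_of_le (f := fun n : ℕ => (1/2 : ℝ) ^ n) ?_ ?_
    (summable_geometric_of_lt_one (by norm_num : (0:ℝ) ≤ 1/2) (by norm_num : (1/2:ℝ) < 1))
  · intro n; positivity
  · intro n
    have h1 : r ^ (n + K) * M ≤ 1/2 := by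
      calc r ^ (n + K) * M ≤ r ^ K * M := by
            apply mul_le_mul_of_nonneg_right _ hM
            exact pow_le_pow_of_le_one hr0 hr1.le (by omega)
        _ ≤ 1/2 := hK
    have h0 : 0 ≤ r ^ (n + K) * M := by positivity
    calc r ^ ((n + K) ^ 2) * M ^ (n + K) = (r ^ (n + K) * M) ^ (n + K) := by
          rw [mul_pow, ← pow_mul, sq]
      _ ≤ (1/2 : ℝ) ^ (n + K) := pow_le_pow_left₀ h0 h1 _
      _ ≤ (1/2 : ℝ) ^ n := pow_le_pow_of_le_one (by norm_num) (by norm_num) (by omega)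

lemma summable_bound_int {r M : ℝ} (hr0 : 0 ≤ r) (hr1 : r < 1) (hM : 0 ≤ M) (C : ℝ) :
    Summable (fun j : ℤ => C * (r ^ (j.natAbs ^ 2) * M ^ j.natAbs)) := by
  apply Summable.mul_left
  apply Summable.of_nat_of_neg
  · exact (summable_rsq_nat hr0 hr1 hM).congr fun k => by simp
  · exact (summable_rsq_nat hr0 hr1 hM).congr fun k => by simp

/-- Norm of `p^(j²) * u^j` (zpow). -/
lemma norm_term_le {p u : ℂ} (hp0 : p ≠ 0) (hu : u ≠ 0) (j : ℤ) :
    ‖p ^ (j ^ 2) * u ^ j‖ ≤ ‖p‖ ^ (j.natAbs ^ 2) * (max ‖u‖ ‖u⁻¹‖) ^ j.natAbs := by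
  rw [norm_mul]
  set a := j.natAbs with ha
  apply mul_le_mul _ _ (norm_nonneg _) (by positivity)
  · rw [show (j ^ 2 : ℤ) = ((a ^ 2 : ℕ) : ℤ) by push_cast; rw [← sq_abs, ha, Nat.cast_natAbs]; simp, zpow_natCast, norm_pow]
  · rcases Int.natAbs_eq j with h | h
    · rw [← ha] at h
      rw [h, zpow_natCast, norm_pow]
      exact pow_le_pow_left₀ (norm_nonneg u) (le_max_left _ _) _
    · rw [← ha] at h
      rw [h, zpow_neg, ← inv_zpow, zpow_natCast, norm_pow]
      exact pow_le_pow_left₀ (norm_nonneg _) (le_max_right _ _) _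

/-- Jacobi triple product, core version. -/
theorem core {p u : ℂ} (hp : ‖p‖ < 1) (hp0 : p ≠ 0) (hu : u ≠ 0) :
    ∑' k : ℤ, p ^ (k ^ 2) * u ^ k
      = ∏' m : ℕ, ((1 - (p ^ 2) ^ (m + 1)) * (1 + u * p ^ (2 * m + 1))
          * (1 + u⁻¹ * p ^ (2 * m + 1))) := by
  have hq : ‖p ^ 2‖ < 1 := by
    rw [norm_pow]; exact pow_lt_one₀ (norm_nonneg p) hp two_ne_zero
  set q : ℂ := p ^ 2 with hqdef
  set Finf : ℂ := ∏' i : ℕ, (1 - q ^ (i + 1)) with hFinf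
  have hF0 : Finf ≠ 0 := Finf_ne_zero hq
  set G : ℕ → ℂ := fun m => (1 - q ^ (m + 1)) * (1 + u * p ^ (2 * m + 1))
      * (1 + u⁻¹ * p ^ (2 * m + 1)) with hG
  -- multipliability of the factors
  have hsummBC : ∀ v : ℂ, Summable (fun m : ℕ => v * p ^ (2 * m + 1)) := by
    intro v
    have : Summable (fun m : ℕ => (v * p) * q ^ m) :=
      (summable_geometric_of_norm_lt_one hq).mul_left (v * p)
    apply this.congr
    intro m
    rw [hqdef, ← pow_mul, pow_succ, pow_mul]
    ring
  have MB : Multipliable (fun m : ℕ => 1 + u * p ^ (2 * m + 1)) :=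
    multipliable_one_add (hsummBC u)
  have MC : Multipliable (fun m : ℕ => 1 + u⁻¹ * p ^ (2 * m + 1)) :=
    multipliable_one_add (hsummBC u⁻¹)
  have MG : Multipliable G := ((multipliable_F hq).mul MB).mul MC
  -- the interpolating functions
  set f : ℕ → ℤ → ℂ := fun n j =>
    if -(n : ℤ) ≤ j ∧ j ≤ n then Finf * B q (2 * n) ((j + n).toNat) * (p ^ (j ^ 2) * u ^ j)
    else 0 with hf
  -- Step 1: tsum of f n  =  Finf * (finite jacobi sum)
  have step1 : ∀ n : ℕ, (∑' j : ℤ, f n j)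
      = Finf * ∏ i ∈ range n, ((1 + u * p ^ (2 * i + 1)) * (1 + u⁻¹ * p ^ (2 * i + 1))) := by
    intro n
    rw [fjtp hp hp0 hu n, mul_sum]
    rw [tsum_eq_sum (s := Finset.Icc (-(n : ℤ)) n) (f := f n) ?side]
    case side =>
      intro j hj
      rw [Finset.mem_Icc] at hj
      rw [hf]
      simp only
      rw [if_neg]
      omega
    apply Finset.sum_nbij' (i := fun j : ℤ => (j + n).toNat) (j := fun k : ℕ => (k : ℤ) - n)
    · intro j hj
      rw [Finset.mem_Icc] at hj
      rw [Finset.mem_range]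
      omega
    · intro k hk
      rw [Finset.mem_range] at hk
      rw [Finset.mem_Icc]
      omega
    · intro j hj
      rw [Finset.mem_Icc] at hj
      omega
    · intro k hk
      rw [Finset.mem_range] at hk
      omega
    · intro j hj
      rw [Finset.mem_Icc] at hj
      rw [hf]
      simp only
      rw [if_pos (by omega)]
      rw [show (((j + (n : ℤ)).toNat : ℤ) - n) = j by omega]
      ring
  -- Step 2: rewrite as products of G
  have step2 : ∀ n : ℕ, (∑' j : ℤ, f n j) = (Finf / F q n) * ∏ i ∈ range n, G i := by
    intro n
    rw [step1 n, hG]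
    have : (∏ i ∈ range n, ((1 - q ^ (i + 1)) * (1 + u * p ^ (2 * i + 1))
        * (1 + u⁻¹ * p ^ (2 * i + 1))))
        = F q n * ∏ i ∈ range n, ((1 + u * p ^ (2 * i + 1)) * (1 + u⁻¹ * p ^ (2 * i + 1))) := by
      rw [F, ← prod_mul_distrib]
      exact prod_congr rfl fun i _ => by ring
    rw [this]
    field_simp [F_ne_zero hq n]
  -- Step 3: the product side converges
  have step3 : Tendsto (fun n : ℕ => (Finf / F q n) * ∏ i ∈ range n, G i)
      atTop (𝓝 (∏' m : ℕ, G m)) := by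
    have t1 : Tendsto (fun n : ℕ => Finf / F q n) atTop (𝓝 (Finf / Finf)) :=
      tendsto_const_nhds.div (tendsto_F hq) hF0
    rw [div_self hF0] at t1
    have t2 : Tendsto (fun n : ℕ => ∏ i ∈ range n, G i) atTop (𝓝 (∏' m : ℕ, G m)) :=
      MG.hasProd.tendsto_prod_nat
    have := t1.mul t2
    rwa [one_mul] at this
  -- Step 4: Tannery / dominated convergence for the sum side
  obtain ⟨CB, hCB0, hCB⟩ := norm_B_le hq
  have step4 : Tendsto (fun n : ℕ => ∑' j : ℤ, f n j) atTop
      (𝓝 (∑' j : ℤ, p ^ (j ^ 2) * u ^ j)) := by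
    apply tendsto_tsum_of_dominated_convergence
      (bound := fun j : ℤ => (‖Finf‖ * CB) * (‖p‖ ^ (j.natAbs ^ 2) * (max ‖u‖ ‖u⁻¹‖) ^ j.natAbs))
    · exact summable_bound_int (norm_nonneg p) hp (le_max_of_le_left (norm_nonneg u)) _
    · -- pointwise convergence
      intro j
      have t5 : Tendsto (fun n : ℕ => (Finf * B q (2 * n) ((j + n).toNat)) * (p ^ (j ^ 2) * u ^ j))
          atTop (𝓝 (1 * (p ^ (j ^ 2) * u ^ j))) :=
        (tendsto_FinfB hq j).mul_const _
      rw [one_mul] at t5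
      apply t5.congr'
      filter_upwards [eventually_ge_atTop j.natAbs] with n hn
      rw [hf]
      simp only
      rw [if_pos (by omega)]
    · -- uniform bound
      apply Filter.Eventually.of_forall
      intro n j
      rw [hf]
      simp only
      split_ifs with h
      · rw [norm_mul, norm_mul]
        apply mul_le_mul
        · exact mul_le_mul le_rfl (hCB (2 * n) ((j + n).toNat)) (norm_nonneg _) (norm_nonneg _)
        · exact norm_term_le hp0 hu j
        · exact norm_nonneg _
        · positivity
      · rw [norm_zero]
        positivity
  -- conclude
  have step3' : Tendsto (fun n : ℕ => ∑' j : ℤ, f n j) atTop (𝓝 (∏' m : ℕ, G m)) := by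
    rw [tendsto_congr step2]
    exact step3
  exact tendsto_nhds_unique step4 step3'

end JTP

/-- Jacobi triple product, shifted form: for `r ∈ ℚ`, `r ≠ 1/2`
(with `-1/2 < r < 1/2` ensuring absolute convergence), `q = e^{2πiτ}` with `Im τ > 0`,
`z = e^{2πiσ}`:
`∑_{m∈ℤ+r} q^{m²/2} z^m
  = z^r q^{r²/2} ∏_{m>0} (1-qᵐ)(1+z q^{m+r-1/2})(1+z⁻¹ q^{m-r-1/2})`,
where fractional powers of `q` and `z` are taken via the exponential parametrization. -/
theorem jacobi_triple_product_shifted (r : ℚ) (hr : r ≠ 1/2)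
    (hr1 : -(1/2 : ℚ) < r) (hr2 : r < 1/2) (τ σ : ℂ) (hτ : 0 < τ.im) :
    (∑' k : ℤ, Complex.exp ((Real.pi : ℂ) * Complex.I * ((k : ℂ) + (r : ℂ)) ^ 2 * τ +
        2 * (Real.pi : ℂ) * Complex.I * ((k : ℂ) + (r : ℂ)) * σ)) =
      Complex.exp (2 * (Real.pi : ℂ) * Complex.I * (r : ℂ) * σ) *
        Complex.exp ((Real.pi : ℂ) * Complex.I * (r : ℂ) ^ 2 * τ) *
        ∏' m : ℕ,
          ((1 - Complex.exp (2 * (Real.pi : ℂ) * Complex.I * τ) ^ (m + 1)) *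
            (1 + Complex.exp (2 * (Real.pi : ℂ) * Complex.I * σ) *
              Complex.exp (2 * (Real.pi : ℂ) * Complex.I *
                (((m : ℂ) + 1) + (r : ℂ) - 1/2) * τ)) *
            (1 + (Complex.exp (2 * (Real.pi : ℂ) * Complex.I * σ))⁻¹ *
              Complex.exp (2 * (Real.pi : ℂ) * Complex.I *
                (((m : ℂ) + 1) - (r : ℂ) - 1/2) * τ))) := by
  set π : ℂ := (Real.pi : ℂ) with hπ
  set I : ℂ := Complex.I with hI
  set p : ℂ := Complex.exp (π * I * τ) with hp
  set u : ℂ := Complex.exp (2 * π * I * σ + 2 * π * I * (r : ℂ) * τ) with hu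
  have hp0 : p ≠ 0 := Complex.exp_ne_zero _
  have hu0 : u ≠ 0 := Complex.exp_ne_zero _
  have hpτ : ‖p‖ < 1 := by
    rw [hp, Complex.norm_exp]
    rw [Real.exp_lt_one_iff]
    have : (π * I * τ).re = -(Real.pi * τ.im) := by
      rw [hπ, hI]
      simp [Complex.mul_re, Complex.mul_im]
    rw [this]
    nlinarith [Real.pi_pos]
  have hzpow : ∀ (w : ℂ) (n : ℤ), Complex.exp w ^ n = Complex.exp ((n : ℂ) * w) := by
    intro w n
    rw [← Complex.exp_int_mul]
  -- term-by-term identification of the sum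
  have hterm : ∀ k : ℤ,
      Complex.exp (π * I * ((k : ℂ) + (r : ℂ)) ^ 2 * τ + 2 * π * I * ((k : ℂ) + (r : ℂ)) * σ)
        = (Complex.exp (2 * π * I * (r : ℂ) * σ) * Complex.exp (π * I * (r : ℂ) ^ 2 * τ))
          * (p ^ (k ^ 2) * u ^ k) := by
    intro k
    rw [hp, hu, hzpow, hzpow, ← Complex.exp_add, ← Complex.exp_add, ← Complex.exp_add]
    congr 1
    push_cast
    ring
  calc (∑' k : ℤ, Complex.exp (π * I * ((k : ℂ) + (r : ℂ)) ^ 2 * τ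
          + 2 * π * I * ((k : ℂ) + (r : ℂ)) * σ))
      = ∑' k : ℤ, (Complex.exp (2 * π * I * (r : ℂ) * σ) * Complex.exp (π * I * (r : ℂ) ^ 2 * τ))
          * (p ^ (k ^ 2) * u ^ k) := tsum_congr hterm
    _ = (Complex.exp (2 * π * I * (r : ℂ) * σ) * Complex.exp (π * I * (r : ℂ) ^ 2 * τ))
          * ∑' k : ℤ, p ^ (k ^ 2) * u ^ k := tsum_mul_left
    _ = _ := by
        rw [JTP.core hpτ hp0 hu0]
        congr 1
        apply tprod_congr
        intro m
        have hp2 : (p ^ 2) = Complex.exp (2 * π * I * τ) := by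
          rw [hp, sq, ← Complex.exp_add]
          congr 1
          ring
        have h2 : u * p ^ (2 * m + 1)
            = Complex.exp (2 * π * I * σ)
              * Complex.exp (2 * π * I * (((m : ℂ) + 1) + (r : ℂ) - 1/2) * τ) := by
          rw [hp, hu, ← Complex.exp_nat_mul, ← Complex.exp_add, ← Complex.exp_add]
          congr 1
          push_cast
          ring
        have h3 : u⁻¹ * p ^ (2 * m + 1)
            = (Complex.exp (2 * π * I * σ))⁻¹
              * Complex.exp (2 * π * I * (((m : ℂ) + 1) - (r : ℂ) - 1/2) * τ) := by
          rw [hp, hu, ← Complex.exp_nat_mul, ← Complex.exp_neg, ← Complex.exp_neg,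
            ← Complex.exp_add, ← Complex.exp_add]
          congr 1
          push_cast
          ring
        rw [hp2, h2, h3]
end

section
/- (Jacobi triple product, half-integer case) For |q| < 1 and z ≠ 0: ∑_{m ∈ ℤ+1/2} q^{m²/2} z^m = (z^{1/2} + z^{-1/2}) q^{1/8} ∏_{m>0} (1 - q^m)(1 + z q^m)(1 + z^{-1} q^m). -/
open Finset Filter Complex Topology

namespace JTP

variable (q z : ℂ)

/-- q-Pochhammer `∏_{j=1}^n (1-q^j)`. -/
noncomputable def D (n : ℕ) : ℂ := ∏ j ∈ Finset.range n, (1 - q ^ (j + 1))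

/-- Gaussian binomial as a complex number. -/
noncomputable def G (n : ℕ) (m : ℤ) : ℂ :=
  if 0 ≤ m ∧ m ≤ n then D q n / (D q m.toNat * D q (n - m.toNat)) else 0

/-- Triangular number. -/
def T (k : ℤ) : ℤ := k * (k + 1) / 2

noncomputable def c (N : ℕ) (k : ℤ) : ℂ := G q (2 * N) (N + k) * q ^ T k

variable {q z}

lemma two_T (k : ℤ) : 2 * T k = k * (k + 1) := by
  rw [T, mul_comm]
  exact Int.ediv_mul_cancel (Int.even_mul_succ_self k).two_dvd

lemma T_succ (k : ℤ) : T (k + 1) = T k + (k + 1) := by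
  have h1 := two_T k; have h2 := two_T (k+1); nlinarith [h1, h2]

lemma T_pred (k : ℤ) : T (k - 1) = T k - k := by
  have h1 := two_T k; have h2 := two_T (k-1); nlinarith [h1, h2]

lemma T_nonneg (k : ℤ) : 0 ≤ T k := by
  have := two_T k
  nlinarith [mul_self_nonneg (2*k+1)]

section q

variable (hq : ‖q‖ < 1)
include hq

lemma one_sub_pow_ne (n : ℕ) : 1 - q ^ (n + 1) ≠ 0 := by
  intro h
  have h2 : q ^ (n+1) = 1 := by linear_combination -h
  have : ‖q ^ (n+1)‖ < 1 := by
    rw [norm_pow]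
    exact pow_lt_one₀ (norm_nonneg q) hq (Nat.succ_ne_zero n)
  rw [h2, norm_one] at this
  exact lt_irrefl _ this

lemma D_ne_zero (n : ℕ) : D q n ≠ 0 :=
  Finset.prod_ne_zero_iff.2 fun j _ => one_sub_pow_ne hq j

omit hq in
lemma D_succ (n : ℕ) : D q (n + 1) = D q n * (1 - q ^ (n + 1)) := Finset.prod_range_succ _ n

end q

end JTP

namespace JTP
open Finset

variable {q z : ℂ}

section q
variable (hq : ‖q‖ < 1)
include hq

omit hq in
lemma D_zero : D q 0 = 1 := rfl

lemma G_zero (n : ℕ) : G q n 0 = 1 := by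
  rw [G, if_pos (by omega)]
  simp [D_zero, div_self (D_ne_zero hq n)]

lemma G_self (n : ℕ) : G q n n = 1 := by
  rw [G, if_pos (by constructor <;> omega)]
  simp [D_zero, div_self (D_ne_zero hq n)]

omit hq in
lemma G_neg {n : ℕ} {m : ℤ} (h : m < 0) : G q n m = 0 := by
  rw [G, if_neg (by omega)]

omit hq in
lemma G_gt {n : ℕ} {m : ℤ} (h : (n : ℤ) < m) : G q n m = 0 := by
  rw [G, if_neg (by omega)]

lemma G_pascal_b (n : ℕ) (m : ℤ) :
    G q (n + 1) m = q ^ m * G q n m + G q n (m - 1) := by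
  rcases lt_trichotomy m 0 with hm | hm | hm
  · rw [G_neg hm, G_neg (by omega), G_neg (by omega : m - 1 < 0)]; ring
  · subst hm
    rw [G_zero hq, G_zero hq, G_neg (by omega : (0:ℤ) - 1 < 0)]; simp
  · rcases lt_trichotomy m ((n : ℤ) + 1) with hm2 | hm2 | hm2
    · -- main case : 1 ≤ m ≤ n
      lift m to ℕ using hm.le with a ha
      have ha1 : 1 ≤ a := by exact_mod_cast hm
      have han : a ≤ n := by exact_mod_cast (by omega : (a : ℤ) ≤ n)
      have e1 : ((a : ℤ)).toNat = a := Int.toNat_natCast a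
      have e2 : ((a : ℤ) - 1).toNat = a - 1 := by omega
      rw [G, if_pos (by constructor <;> omega), G, if_pos (by constructor <;> omega),
        G, if_pos (by constructor <;> omega), e1, e2]
      have hz1 : (q : ℂ) ^ (a : ℤ) = q ^ a := zpow_natCast q a
      rw [hz1]
      have hsub1 : n + 1 - a = (n - a) + 1 := by omega
      have hsub2 : n - (a - 1) = (n - a) + 1 := by omega
      have hsuba : a = (a - 1) + 1 := by omega
      have hDn1 : D q (n + 1) = D q n * (1 - q ^ (n + 1)) := D_succ n
      have hDa : D q a = D q (a - 1) * (1 - q ^ a) := by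
        nth_rewrite 1 [hsuba]; rw [D_succ, ← hsuba]
      have hDna : D q (n + 1 - a) = D q (n - a) * (1 - q ^ (n - a + 1)) := by
        rw [hsub1, D_succ]
      have key : q ^ (n + 1) = q ^ a * q ^ (n - a + 1) := by
        rw [← pow_add]; congr 1; omega
      rw [hsub2, D_succ (n := n - a), hDn1, hDa, hDna, key]
      have d1 := D_ne_zero hq (a - 1)
      have d2 := D_ne_zero hq (n - a)
      have p2 := one_sub_pow_ne hq (n - a)
      have p1' : (1 : ℂ) - q ^ a ≠ 0 := by rw [hsuba]; exact one_sub_pow_ne hq (a - 1)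
      set X := q ^ a with hX
      set Y := q ^ (n - a + 1) with hY
      field_simp
      ring
    · -- m = n + 1
      subst hm2
      rw [show ((n : ℤ) + 1) = ((n + 1 : ℕ) : ℤ) by push_cast; ring, G_self hq,
        G_gt (by push_cast; omega), show ((n + 1 : ℕ) : ℤ) - 1 = (n : ℤ) by push_cast; ring,
        G_self hq]
      ring
    · rw [G_gt (by push_cast; omega), G_gt (by omega), G_gt (by omega)]; ring

lemma G_pascal_a (n : ℕ) (m : ℤ) :
    G q (n + 1) m = G q n m + q ^ ((n : ℤ) + 1 - m) * G q n (m - 1) := by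
  rcases lt_trichotomy m 0 with hm | hm | hm
  · rw [G_neg hm, G_neg (by omega), G_neg (by omega : m - 1 < 0)]; ring
  · subst hm
    rw [G_zero hq, G_zero hq, G_neg (by omega : (0:ℤ) - 1 < 0)]; ring
  · rcases lt_trichotomy m ((n : ℤ) + 1) with hm2 | hm2 | hm2
    · lift m to ℕ using hm.le with a ha
      have ha1 : 1 ≤ a := by exact_mod_cast hm
      have han : a ≤ n := by exact_mod_cast (by omega : (a : ℤ) ≤ n)
      have e1 : ((a : ℤ)).toNat = a := Int.toNat_natCast a
      have e2 : ((a : ℤ) - 1).toNat = a - 1 := by omega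
      rw [G, if_pos (by constructor <;> omega), G, if_pos (by constructor <;> omega),
        G, if_pos (by constructor <;> omega), e1, e2]
      have hz1 : (q : ℂ) ^ ((n : ℤ) + 1 - a) = q ^ (n - a + 1) := by
        rw [show ((n : ℤ) + 1 - a) = ((n - a + 1 : ℕ) : ℤ) by omega, zpow_natCast]
      rw [hz1]
      have hsub1 : n + 1 - a = (n - a) + 1 := by omega
      have hsub2 : n - (a - 1) = (n - a) + 1 := by omega
      have hsuba : a = (a - 1) + 1 := by omega
      have hDn1 : D q (n + 1) = D q n * (1 - q ^ (n + 1)) := D_succ n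
      have hDa : D q a = D q (a - 1) * (1 - q ^ a) := by
        nth_rewrite 1 [hsuba]; rw [D_succ, ← hsuba]
      have hDna : D q (n + 1 - a) = D q (n - a) * (1 - q ^ (n - a + 1)) := by
        rw [hsub1, D_succ]
      have key : q ^ (n + 1) = q ^ a * q ^ (n - a + 1) := by
        rw [← pow_add]; congr 1; omega
      rw [hsub2, D_succ (n := n - a), hDn1, hDa, hDna, key]
      have d1 := D_ne_zero hq (a - 1)
      have d2 := D_ne_zero hq (n - a)
      have p2 := one_sub_pow_ne hq (n - a)
      have p1' : (1 : ℂ) - q ^ a ≠ 0 := by rw [hsuba]; exact one_sub_pow_ne hq (a - 1)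
      set X := q ^ a with hX
      set Y := q ^ (n - a + 1) with hY
      field_simp
      ring
    · subst hm2
      rw [show ((n : ℤ) + 1) = ((n + 1 : ℕ) : ℤ) by push_cast; ring, G_self hq,
        G_gt (by push_cast; omega), show ((n + 1 : ℕ) : ℤ) - 1 = (n : ℤ) by push_cast; ring,
        G_self hq]
      simp
    · rw [G_gt (by push_cast; omega), G_gt (by omega), G_gt (by omega)]; ring

end q
end JTP

namespace JTP
open Finset

variable {q z : ℂ}

lemma c_rec (hq : ‖q‖ < 1) (hq0 : q ≠ 0) (N : ℕ) (k : ℤ) :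
    c q (N + 1) k =
      (1 + q ^ (2 * N + 1)) * c q N k + q ^ (N + 1) * c q N (k - 1) +
        q ^ N * c q N (k + 1) := by
  have qz : ∀ (m : ℕ) (j : ℤ), q ^ ((m : ℤ) + j) = q ^ m * q ^ j := fun m j => by
    rw [zpow_add₀ hq0, zpow_natCast]
  unfold c
  rw [show 2 * (N + 1) = (2 * N + 1) + 1 from by ring, G_pascal_a hq, G_pascal_b hq,
    G_pascal_b hq]
  rw [show ((N + 1 : ℕ) : ℤ) + k - 1 = (N : ℤ) + k from by push_cast; ring]
  rw [show (N : ℤ) + k - 1 = (N : ℤ) + (k - 1) from by ring]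
  rw [show ((2 * N + 1 : ℕ) : ℤ) + 1 - (((N + 1 : ℕ) : ℤ) + k) = ((N + 1 : ℕ) : ℤ) + (-k) from by
    push_cast; ring]
  rw [show ((N + 1 : ℕ) : ℤ) + k = (N : ℤ) + (k + 1) from by push_cast; ring]
  rw [qz, qz, qz, T_pred, T_succ]
  rw [sub_eq_add_neg (T k) k, zpow_add₀ hq0, show T k + (k + 1) = T k + k + 1 from by ring,
    zpow_add₀ hq0, zpow_add₀ hq0, zpow_one, zpow_neg]
  have hK : q ^ k ≠ 0 := zpow_ne_zero k hq0
  field_simp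
  simp only [zpow_add₀ hq0]
  ring

lemma c_eq_zero {N : ℕ} {k : ℤ} (h : k ∉ Finset.Icc (-(N : ℤ)) (N : ℤ)) : c q N k = 0 := by
  simp only [Finset.mem_Icc, not_and_or, not_le] at h
  rcases h with h | h
  · rw [c, G_neg (by omega), zero_mul]
  · rw [c, G_gt (by push_cast; omega), zero_mul]

lemma summable_c (N : ℕ) (f : ℤ → ℂ) : Summable (fun k => c q N k * f k) :=
  summable_of_ne_finset_zero (s := Finset.Icc (-(N : ℤ)) (N : ℤ))
    fun k hk => by rw [c_eq_zero hk, zero_mul]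

end JTP

namespace JTP
open Finset

variable {q z : ℂ}

lemma finite_id (hq : ‖q‖ < 1) (hq0 : q ≠ 0) (hz : z ≠ 0) (N : ℕ) :
    (∏ j ∈ Finset.range N, ((1 + z * q ^ (j + 1)) * (1 + z⁻¹ * q ^ j))) =
      ∑' k : ℤ, c q N k * z ^ k := by
  induction N with
  | zero =>
    rw [Finset.prod_range_zero]
    rw [tsum_eq_single 0 (fun k hk => by
      rw [c_eq_zero (by simpa using hk), zero_mul])]
    have : c q 0 0 = 1 := by
      rw [c, show ((0 : ℕ) : ℤ) + 0 = ((0 : ℕ) : ℤ) from by ring, G_self hq,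
        show T 0 = 0 from rfl, zpow_zero, mul_one]
    rw [this, zpow_zero, mul_one]
  | succ N ih =>
    rw [Finset.prod_range_succ, ih]
    have hterm : ∀ k : ℤ, c q (N + 1) k * z ^ k =
        (1 + q ^ (2 * N + 1)) * (c q N k * z ^ k) +
          (q ^ (N + 1) * z) * (c q N (k - 1) * z ^ (k - 1)) +
          (q ^ N * z⁻¹) * (c q N (k + 1) * z ^ (k + 1)) := by
      intro k
      rw [c_rec hq hq0]
      rw [show z ^ k = z ^ (k - 1) * z from by
        rw [← zpow_add_one₀ hz]; congr 1; ring]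
      rw [show z ^ (k + 1) = z ^ (k - 1) * z * z from by
        rw [← zpow_add_one₀ hz, ← zpow_add_one₀ hz]; congr 1; ring]
      field_simp
    rw [tsum_congr hterm]
    have s1 : Summable fun k : ℤ => c q N k * z ^ k := summable_c N _
    have s2 : Summable fun k : ℤ => c q N (k - 1) * z ^ (k - 1) := by
      have := (Equiv.subRight (1 : ℤ)).summable_iff
        (f := fun k : ℤ => c q N k * z ^ k) |>.2 s1
      simpa [Equiv.subRight, Function.comp_def] using this
    have s3 : Summable fun k : ℤ => c q N (k + 1) * z ^ (k + 1) := by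
      have := (Equiv.addRight (1 : ℤ)).summable_iff
        (f := fun k : ℤ => c q N k * z ^ k) |>.2 s1
      simpa [Equiv.addRight, Function.comp_def] using this
    rw [Summable.tsum_add (((s1.mul_left _).add (s2.mul_left _))) (s3.mul_left _),
      Summable.tsum_add (s1.mul_left _) (s2.mul_left _), tsum_mul_left, tsum_mul_left, tsum_mul_left]
    have e2 : (∑' k : ℤ, c q N (k - 1) * z ^ (k - 1)) = ∑' k : ℤ, c q N k * z ^ k := by
      have := (Equiv.subRight (1 : ℤ)).tsum_eq (f := fun k : ℤ => c q N k * z ^ k)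
      simpa [Equiv.subRight] using this
    have e3 : (∑' k : ℤ, c q N (k + 1) * z ^ (k + 1)) = ∑' k : ℤ, c q N k * z ^ k := by
      have := (Equiv.addRight (1 : ℤ)).tsum_eq (f := fun k : ℤ => c q N k * z ^ k)
      simpa [Equiv.addRight] using this
    rw [e2, e3]
    have hzz : z * z⁻¹ = 1 := mul_inv_cancel₀ hz
    set S := ∑' k : ℤ, c q N k * z ^ k
    linear_combination (S * q ^ N * q ^ (N + 1)) * hzz
end JTP

namespace JTP
open Finset Filter Topology

variable {q z : ℂ}

section bounds
variable (hq : ‖q‖ < 1)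
include hq

/-- geometric tail bound -/
lemma sum_geo (n : ℕ) : ∑ j ∈ Finset.range n, ‖q‖ ^ (j + 1) ≤ ‖q‖ / (1 - ‖q‖) := by
  have h0 : (0:ℝ) ≤ ‖q‖ := norm_nonneg q
  have : ∑ j ∈ Finset.range n, ‖q‖ ^ (j + 1) = ‖q‖ * ∑ j ∈ Finset.range n, ‖q‖ ^ j := by
    rw [Finset.mul_sum]; exact Finset.sum_congr rfl fun j _ => by ring
  rw [this, div_eq_mul_inv]
  gcongr
  calc ∑ j ∈ Finset.range n, ‖q‖ ^ j ≤ ∑' j : ℕ, ‖q‖ ^ j :=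
        (summable_geometric_of_lt_one h0 hq).sum_le_tsum _ (fun j _ => pow_nonneg h0 j)
    _ = (1 - ‖q‖)⁻¹ := tsum_geometric_of_lt_one h0 hq

lemma norm_D_le (n : ℕ) : ‖D q n‖ ≤ Real.exp (‖q‖ / (1 - ‖q‖)) := by
  rw [D, norm_prod]
  calc ∏ j ∈ Finset.range n, ‖1 - q ^ (j + 1)‖
      ≤ ∏ j ∈ Finset.range n, Real.exp (‖q‖ ^ (j + 1)) := by
        apply Finset.prod_le_prod (fun j _ => norm_nonneg _) (fun j _ => ?_)
        calc ‖1 - q ^ (j + 1)‖ ≤ ‖(1:ℂ)‖ + ‖q ^ (j + 1)‖ := norm_sub_le _ _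
          _ = 1 + ‖q‖ ^ (j + 1) := by rw [norm_one, norm_pow]
          _ ≤ Real.exp (‖q‖ ^ (j + 1)) := by
              have := Real.add_one_le_exp (‖q‖ ^ (j + 1)); linarith
    _ = Real.exp (∑ j ∈ Finset.range n, ‖q‖ ^ (j + 1)) := (Real.exp_sum _ _).symm
    _ ≤ Real.exp (‖q‖ / (1 - ‖q‖)) := Real.exp_le_exp.2 (sum_geo hq n)

lemma le_norm_D (n : ℕ) : Real.exp (-(‖q‖ / (1 - ‖q‖)) / (1 - ‖q‖)) ≤ ‖D q n‖ := by
  have h0 : (0:ℝ) ≤ ‖q‖ := norm_nonneg q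
  have h1 : (0:ℝ) < 1 - ‖q‖ := by linarith
  rw [D, norm_prod]
  calc Real.exp (-(‖q‖ / (1 - ‖q‖)) / (1 - ‖q‖))
      ≤ Real.exp (-(∑ j ∈ Finset.range n, ‖q‖ ^ (j + 1)) / (1 - ‖q‖)) := by
        apply Real.exp_le_exp.2
        rw [div_le_div_iff_of_pos_right h1]
        exact neg_le_neg (sum_geo hq n)
    _ = ∏ j ∈ Finset.range n, Real.exp (-(‖q‖ ^ (j + 1)) / (1 - ‖q‖)) := by
        rw [← Real.exp_sum]
        congr 1
        rw [← Finset.sum_div, ← Finset.sum_neg_distrib]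
    _ ≤ ∏ j ∈ Finset.range n, ‖1 - q ^ (j + 1)‖ := by
        apply Finset.prod_le_prod (fun j _ => (Real.exp_pos _).le) (fun j _ => ?_)
        have hxq : ‖q‖ ^ (j + 1) ≤ ‖q‖ := by
          calc ‖q‖ ^ (j + 1) ≤ ‖q‖ ^ 1 := pow_le_pow_of_le_one h0 hq.le (by omega)
            _ = ‖q‖ := pow_one _
        have hx1 : ‖q‖ ^ (j + 1) < 1 := lt_of_le_of_lt hxq hq
        have hx0 : (0:ℝ) ≤ ‖q‖ ^ (j + 1) := pow_nonneg h0 _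
        set x := ‖q‖ ^ (j + 1) with hx
        have hxx : (0:ℝ) < 1 - x := by linarith
        have step1 : Real.exp (-x / (1 - ‖q‖)) ≤ Real.exp (-x / (1 - x)) := by
          apply Real.exp_le_exp.2
          rw [neg_div, neg_div, neg_le_neg_iff]
          gcongr
          all_goals linarith
        have step2 : Real.exp (-x / (1 - x)) ≤ 1 - x := by
          have h := Real.add_one_le_exp (x / (1 - x))
          have h2 : (1 - x)⁻¹ ≤ Real.exp (x / (1 - x)) := by
            have he : (1 - x)⁻¹ = x / (1 - x) + 1 := by field_simp; ring
            linarith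
          rw [show -x / (1 - x) = -(x / (1 - x)) from by ring, Real.exp_neg]
          rw [inv_le_comm₀ (Real.exp_pos _) hxx]
          exact h2
        have step3 : 1 - x ≤ ‖1 - q ^ (j + 1)‖ := by
          calc 1 - x = ‖(1:ℂ)‖ - ‖q ^ (j + 1)‖ := by rw [norm_one, norm_pow]
            _ ≤ ‖1 - q ^ (j + 1)‖ := norm_sub_norm_le _ _
        linarith

end bounds
end JTP

namespace JTP
open Finset Filter Topology

variable {q z : ℂ}

lemma hasProd_zero_of_exists_zero {f : ℕ → ℂ} (h : ∃ j, f j = 0) : HasProd f 0 := by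
  obtain ⟨j₀, hj₀⟩ := h
  have hev : ∀ᶠ s : Finset ℕ in atTop, ∏ i ∈ s, f i = (0 : ℂ) := by
    filter_upwards [eventually_ge_atTop ({j₀} : Finset ℕ)] with s hs
    exact Finset.prod_eq_zero (hs (Finset.mem_singleton_self j₀)) hj₀
  exact Tendsto.congr' (hev.mono fun s hs => hs.symm) tendsto_const_nhds

lemma multipliable_of_bound (hq : ‖q‖ < 1) (f : ℕ → ℂ) (C : ℝ)
    (hb : ∀ j, ‖f j - 1‖ ≤ C * ‖q‖ ^ (j + 1)) : Multipliable f := by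
  by_cases hf : ∀ j, f j ≠ 0
  · apply Complex.multipliable_of_summable_log
    have hsum : Summable fun j : ℕ => 3 / 2 * (C * ‖q‖ ^ (j + 1)) := by
      apply Summable.mul_left
      apply Summable.mul_left
      exact (summable_geometric_of_lt_one (norm_nonneg q) hq).comp_injective
        (add_left_injective 1)
    refine Summable.of_norm_bounded_eventually_nat hsum ?_
    have h0 : Tendsto (fun j : ℕ => C * ‖q‖ ^ (j + 1)) atTop (𝓝 0) := by
      have := (tendsto_pow_atTop_nhds_zero_of_norm_lt_one
        (by rwa [Real.norm_eq_abs, abs_norm] : ‖‖q‖‖ < 1)).comp (tendsto_add_atTop_nat 1)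
      simpa using this.const_mul C
    filter_upwards [h0.eventually_le_const (by norm_num : (0:ℝ) < 1/2)] with j hj
    have hb2 : ‖f j - 1‖ ≤ 1 / 2 := le_trans (hb j) hj
    calc ‖Complex.log (f j)‖ = ‖Complex.log (1 + (f j - 1))‖ := by ring_nf
      _ ≤ 3 / 2 * ‖f j - 1‖ := Complex.norm_log_one_add_half_le_self (by simpa using hb2)
      _ ≤ 3 / 2 * (C * ‖q‖ ^ (j + 1)) := by nlinarith [hb j]
  · push_neg at hf
    exact ⟨0, hasProd_zero_of_exists_zero hf⟩

end JTP

namespace JTP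
open Finset Filter Topology

variable {q z : ℂ}

lemma core_s8 (hq : ‖q‖ < 1) (hq0 : q ≠ 0) (hz : z ≠ 0) :
    (∑' k : ℤ, q ^ T k * z ^ k) =
      (1 + z⁻¹) *
        ∏' j : ℕ, ((1 - q ^ (j + 1)) * (1 + z * q ^ (j + 1)) * (1 + z⁻¹ * q ^ (j + 1))) := by
  have hq' : (0:ℝ) ≤ ‖q‖ := norm_nonneg q
  have hnq0 : ‖q‖ ≠ 0 := norm_ne_zero_iff.2 hq0
  have hnz0 : ‖z‖ ≠ 0 := norm_ne_zero_iff.2 hz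
  set S : ℝ := ‖q‖ / (1 - ‖q‖) with hS
  set cl : ℝ := Real.exp (-S / (1 - ‖q‖)) with hcl
  set cu : ℝ := Real.exp S with hcu
  have hcl0 : 0 < cl := Real.exp_pos _
  have hcu0 : 0 < cu := Real.exp_pos _
  -- the limit of the pochhammer products
  have hD : Multipliable (fun j : ℕ => 1 - q ^ (j + 1)) := by
    apply multipliable_of_bound hq _ 1
    intro j
    rw [one_mul, show (1 : ℂ) - q ^ (j+1) - 1 = -(q ^ (j+1)) from by ring, norm_neg, norm_pow]
  set L : ℂ := ∏' j : ℕ, (1 - q ^ (j + 1)) with hL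
  have hDt : Tendsto (fun n => D q n) atTop (𝓝 L) := hD.hasProd.tendsto_prod_nat
  have hLlb : cl ≤ ‖L‖ := ge_of_tendsto' hDt.norm (fun n => le_norm_D hq n)
  have hL0 : L ≠ 0 := by
    intro h; rw [h, norm_zero] at hLlb; linarith
  -- the coefficients e N k and their properties
  set e : ℕ → ℤ → ℂ := fun N k => D q N * G q (2 * N) ((N : ℤ) + k) with he
  set B : ℝ := cu * cu / (cl * cl) with hB
  have hB0 : 0 < B := by positivity
  have h_e_bound : ∀ N k, ‖e N k‖ ≤ B := by
    intro N k
    rw [he]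
    simp only
    rw [G]
    split_ifs with hcond
    · rw [norm_mul, norm_div, norm_mul, ← mul_div_assoc, hB]
      apply div_le_div₀ (by positivity) ?_ (by positivity) ?_
      · exact mul_le_mul (norm_D_le hq N) (norm_D_le hq (2 * N)) (norm_nonneg _) hcu0.le
      · exact mul_le_mul (le_norm_D hq _) (le_norm_D hq _) hcl0.le (norm_nonneg _)
    · rw [mul_zero, norm_zero]; exact hB0.le
  have h_e_tendsto : ∀ k : ℤ, Tendsto (fun N => e N k) atTop (𝓝 1) := by
    intro k
    have haT : Tendsto (fun N : ℕ => ((N : ℤ) + k).toNat) atTop atTop := by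
      apply tendsto_atTop_atTop.2
      intro b
      exact ⟨b + k.natAbs, fun n hn => by omega⟩
    have hbT : Tendsto (fun N : ℕ => ((N : ℤ) - k).toNat) atTop atTop := by
      apply tendsto_atTop_atTop.2
      intro b
      exact ⟨b + k.natAbs, fun n hn => by omega⟩
    have h2T : Tendsto (fun N : ℕ => 2 * N) atTop atTop := by
      apply tendsto_atTop_atTop.2
      intro b
      exact ⟨b, fun n hn => by omega⟩
    have hmain : Tendsto
        (fun N => D q N * (D q (2 * N) /
          (D q (((N : ℤ) + k).toNat) * D q (((N : ℤ) - k).toNat)))) atTop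
        (𝓝 (L * (L / (L * L)))) :=
      hDt.mul ((hDt.comp h2T).div ((hDt.comp haT).mul (hDt.comp hbT)) (mul_ne_zero hL0 hL0))
    have hval : L * (L / (L * L)) = 1 := by field_simp
    rw [hval] at hmain
    apply hmain.congr'
    filter_upwards [eventually_ge_atTop k.natAbs] with N hN
    rw [he]
    simp only
    rw [G, if_pos (by omega),
      show (2 * N - ((N:ℤ) + k).toNat) = ((N:ℤ) - k).toNat from by omega]
  -- summability of the dominating function
  have hBd : Summable (fun k : ℤ => B * (‖q‖ ^ T k * ‖z‖ ^ k)) := by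
    apply Summable.mul_left
    apply Summable.of_nat_of_neg
    · apply summable_of_ratio_norm_eventually_le (r := 1/2) (by norm_num)
      have h0 : Tendsto (fun n : ℕ => ‖q‖ ^ (n + 1) * ‖z‖) atTop (𝓝 0) := by
        have := (tendsto_pow_atTop_nhds_zero_of_norm_lt_one
          (by rwa [Real.norm_eq_abs, abs_norm] : ‖‖q‖‖ < 1)).comp (tendsto_add_atTop_nat 1)
        simpa using this.mul_const ‖z‖
      filter_upwards [h0.eventually_le_const (by norm_num : (0:ℝ) < 1/2)] with n hn
      have hrec : ‖q‖ ^ T ((n:ℤ) + 1) * ‖z‖ ^ ((n:ℤ) + 1) =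
          (‖q‖ ^ (n + 1) * ‖z‖) * (‖q‖ ^ T (n:ℤ) * ‖z‖ ^ (n:ℤ)) := by
        rw [T_succ, zpow_add₀ hnq0, zpow_add₀ hnz0, zpow_one]
        rw [show ((n:ℤ) + 1) = ((n + 1 : ℕ) : ℤ) from by push_cast; ring, zpow_natCast]
        ring
      rw [show ((n + 1 : ℕ) : ℤ) = (n : ℤ) + 1 from by push_cast; ring, hrec]
      rw [Real.norm_eq_abs, Real.norm_eq_abs, abs_mul]
      rw [_root_.abs_of_nonneg (by positivity), _root_.abs_of_nonneg (by positivity)]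
      calc (‖q‖ ^ (n+1) * ‖z‖) * (‖q‖ ^ T (n:ℤ) * ‖z‖ ^ (n:ℤ))
          ≤ 1/2 * (‖q‖ ^ T (n:ℤ) * ‖z‖ ^ (n:ℤ)) := by
            apply mul_le_mul_of_nonneg_right hn (by positivity)
        _ = 1/2 * (‖q‖ ^ T (n:ℤ) * ‖z‖ ^ (n:ℤ)) := rfl
    · apply summable_of_ratio_norm_eventually_le (r := 1/2) (by norm_num)
      have h0 : Tendsto (fun n : ℕ => ‖q‖ ^ n * ‖z‖⁻¹) atTop (𝓝 0) := by
        have := tendsto_pow_atTop_nhds_zero_of_norm_lt_one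
          (by rwa [Real.norm_eq_abs, abs_norm] : ‖‖q‖‖ < 1)
        simpa using this.mul_const ‖z‖⁻¹
      filter_upwards [h0.eventually_le_const (by norm_num : (0:ℝ) < 1/2)] with n hn
      have hrec : ‖q‖ ^ T (-((n:ℤ) + 1)) * ‖z‖ ^ (-((n:ℤ) + 1)) =
          (‖q‖ ^ n * ‖z‖⁻¹) * (‖q‖ ^ T (-(n:ℤ)) * ‖z‖ ^ (-(n:ℤ))) := by
        have hT : T (-((n:ℤ) + 1)) = T (-(n:ℤ)) + n := by
          have h1 := two_T (-(n:ℤ)); have h2 := two_T (-((n:ℤ)+1)); nlinarith [h1, h2]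
        rw [hT, zpow_add₀ hnq0, zpow_natCast, show (-((n:ℤ) + 1)) = (-(n:ℤ)) + (-1) from by ring,
          zpow_add₀ hnz0, zpow_neg_one]
        ring
      rw [show (-((n + 1 : ℕ) : ℤ)) = -((n:ℤ) + 1) from by push_cast; ring, hrec]
      rw [Real.norm_eq_abs, Real.norm_eq_abs, abs_mul]
      rw [_root_.abs_of_nonneg (by positivity), _root_.abs_of_nonneg (by positivity)]
      apply mul_le_mul_of_nonneg_right hn (by positivity)
  -- dominated convergence
  have h_tend : Tendsto (fun N => ∑' k : ℤ, e N k * (q ^ T k * z ^ k)) atTop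
      (𝓝 (∑' k : ℤ, q ^ T k * z ^ k)) := by
    apply tendsto_tsum_of_dominated_convergence hBd
    · intro k
      simpa using (h_e_tendsto k).mul_const (q ^ T k * z ^ k)
    · apply Filter.Eventually.of_forall
      intro N k
      calc ‖e N k * (q ^ T k * z ^ k)‖ ≤ B * ‖q ^ T k * z ^ k‖ := by
            rw [norm_mul]
            exact mul_le_mul_of_nonneg_right (h_e_bound N k) (norm_nonneg _)
        _ = B * (‖q‖ ^ T k * ‖z‖ ^ k) := by rw [norm_mul, norm_zpow, norm_zpow]
  -- identify the sums with the partial products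
  have h_u : ∀ N : ℕ, (∑' k : ℤ, e N k * (q ^ T k * z ^ k)) =
      D q N * ∏ j ∈ Finset.range N, ((1 + z * q ^ (j + 1)) * (1 + z⁻¹ * q ^ j)) := by
    intro N
    rw [finite_id hq hq0 hz N, ← tsum_mul_left]
    apply tsum_congr
    intro k
    rw [he, c]
    ring
  -- the product side
  set h : ℕ → ℂ := fun j =>
    (1 - q ^ (j + 1)) * (1 + z * q ^ (j + 1)) * (1 + z⁻¹ * q ^ (j + 1)) with hh
  have hhM : Multipliable h := by
    apply multipliable_of_bound hq h (2 * (‖z‖ + ‖z‖⁻¹ + 1) + 1)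
    intro j
    have hexp : h j - 1 = q ^ (j + 1) * ((1 - q ^ (j + 1)) * (z + z⁻¹ - 1) - (q ^ (j + 1)) ^ 2) := by
      have hzz : z * z⁻¹ = 1 := mul_inv_cancel₀ hz
      rw [hh]
      linear_combination (q ^ (j + 1)) ^ 2 * (1 - q ^ (j + 1)) * hzz
    rw [hexp, norm_mul, norm_pow, mul_comm]
    apply mul_le_mul_of_nonneg_right ?_ (by positivity)
    have h1 : ‖q ^ (j + 1)‖ ≤ 1 := by
      rw [norm_pow]; exact pow_le_one₀ hq' hq.le
    calc ‖(1 - q ^ (j + 1)) * (z + z⁻¹ - 1) - (q ^ (j + 1)) ^ 2‖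
        ≤ ‖(1 - q ^ (j + 1)) * (z + z⁻¹ - 1)‖ + ‖(q ^ (j + 1)) ^ 2‖ := norm_sub_le _ _
      _ = ‖1 - q ^ (j + 1)‖ * ‖z + z⁻¹ - 1‖ + ‖q ^ (j + 1)‖ ^ 2 := by
          rw [norm_mul, norm_pow]
      _ ≤ 2 * (‖z‖ + ‖z‖⁻¹ + 1) + 1 := by
          have h2 : ‖1 - q ^ (j + 1)‖ ≤ 2 := by
            calc ‖1 - q ^ (j + 1)‖ ≤ ‖(1:ℂ)‖ + ‖q ^ (j + 1)‖ := norm_sub_le _ _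
              _ ≤ 1 + 1 := by rw [norm_one]; linarith
              _ = 2 := by norm_num
          have h3 : ‖z + z⁻¹ - 1‖ ≤ ‖z‖ + ‖z‖⁻¹ + 1 := by
            calc ‖z + z⁻¹ - 1‖ ≤ ‖z + z⁻¹‖ + ‖(1:ℂ)‖ := norm_sub_le _ _
              _ ≤ ‖z‖ + ‖z⁻¹‖ + ‖(1:ℂ)‖ := by gcongr; exact norm_add_le _ _
              _ = ‖z‖ + ‖z‖⁻¹ + 1 := by rw [norm_inv, norm_one]
          have h4 : ‖q ^ (j + 1)‖ ^ 2 ≤ 1 := by nlinarith [norm_nonneg (q ^ (j+1))]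
          nlinarith [norm_nonneg (1 - q ^ (j+1)), norm_nonneg (z + z⁻¹ - 1),
            mul_le_mul h2 h3 (norm_nonneg _) (by norm_num : (0:ℝ) ≤ 2)]
  have hht : Tendsto (fun N => ∏ j ∈ Finset.range N, h j) atTop (𝓝 (∏' j, h j)) :=
    hhM.hasProd.tendsto_prod_nat
  have htail : Tendsto (fun N : ℕ => (1 - q ^ (N + 1)) * (1 + z * q ^ (N + 1))) atTop (𝓝 1) := by
    have hq1 : Tendsto (fun N : ℕ => q ^ (N + 1)) atTop (𝓝 0) := by
      have := (tendsto_pow_atTop_nhds_zero_of_norm_lt_one hq).comp (tendsto_add_atTop_nat 1)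
      simpa [Function.comp_def] using this
    have t1 : Tendsto (fun N : ℕ => (1:ℂ) - q ^ (N + 1)) atTop (𝓝 (1 - 0)) :=
      tendsto_const_nhds.sub hq1
    have t2 : Tendsto (fun N : ℕ => (1:ℂ) + z * q ^ (N + 1)) atTop (𝓝 (1 + z * 0)) :=
      tendsto_const_nhds.add (tendsto_const_nhds.mul hq1)
    have := t1.mul t2
    simpa using this
  have halg : ∀ N : ℕ,
      D q (N + 1) * ∏ j ∈ Finset.range (N + 1), ((1 + z * q ^ (j + 1)) * (1 + z⁻¹ * q ^ j)) =
        (1 + z⁻¹) * (∏ j ∈ Finset.range N, h j) *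
          ((1 - q ^ (N + 1)) * (1 + z * q ^ (N + 1))) := by
    intro N
    rw [Finset.prod_mul_distrib, Finset.prod_range_succ (fun j => 1 + z * q ^ (j + 1)),
      Finset.prod_range_succ' (fun j => 1 + z⁻¹ * q ^ j), D_succ, hh]
    rw [Finset.prod_mul_distrib, Finset.prod_mul_distrib, D]
    simp only [pow_zero, mul_one]
    ring
  have hfinal : Tendsto (fun N => ∑' k : ℤ, e (N + 1) k * (q ^ T k * z ^ k)) atTop
      (𝓝 ((1 + z⁻¹) * (∏' j, h j) * 1)) := by
    have heq : (fun N => ∑' k : ℤ, e (N + 1) k * (q ^ T k * z ^ k)) =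
        fun N => (1 + z⁻¹) * (∏ j ∈ Finset.range N, h j) *
          ((1 - q ^ (N + 1)) * (1 + z * q ^ (N + 1))) :=
      funext fun N => by rw [h_u (N + 1), halg N]
    rw [heq]
    exact (tendsto_const_nhds.mul hht).mul htail
  have hfinal2 : Tendsto (fun N => ∑' k : ℤ, e (N + 1) k * (q ^ T k * z ^ k)) atTop
      (𝓝 (∑' k : ℤ, q ^ T k * z ^ k)) := h_tend.comp (tendsto_add_atTop_nat 1)
  have hid := tendsto_nhds_unique hfinal2 hfinal
  rw [hid, mul_one]

end JTP

/-- Jacobi triple product, half-integer case: with `q = e^{2πiτ}`, `Im τ > 0`,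
`z = e^{2πiσ}` (so `z^{1/2} = e^{πiσ}`):
`∑_{m∈ℤ+1/2} q^{m²/2} z^m
  = (z^{1/2} + z^{-1/2}) q^{1/8} ∏_{m>0} (1-qᵐ)(1+z qᵐ)(1+z⁻¹ qᵐ)`. -/
theorem jacobi_triple_product_half (τ σ : ℂ) (hτ : 0 < τ.im) :
    (∑' k : ℤ, Complex.exp ((Real.pi : ℂ) * Complex.I * ((k : ℂ) + 1/2) ^ 2 * τ +
        2 * (Real.pi : ℂ) * Complex.I * ((k : ℂ) + 1/2) * σ)) =
      (Complex.exp ((Real.pi : ℂ) * Complex.I * σ) +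
          Complex.exp (-((Real.pi : ℂ) * Complex.I * σ))) *
        Complex.exp (2 * (Real.pi : ℂ) * Complex.I * τ / 8) *
        ∏' m : ℕ,
          ((1 - Complex.exp (2 * (Real.pi : ℂ) * Complex.I * τ) ^ (m + 1)) *
            (1 + Complex.exp (2 * (Real.pi : ℂ) * Complex.I * σ) *
              Complex.exp (2 * (Real.pi : ℂ) * Complex.I * τ) ^ (m + 1)) *
            (1 + (Complex.exp (2 * (Real.pi : ℂ) * Complex.I * σ))⁻¹ *
              Complex.exp (2 * (Real.pi : ℂ) * Complex.I * τ) ^ (m + 1))) := by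
  set q : ℂ := Complex.exp (2 * (Real.pi : ℂ) * Complex.I * τ) with hqdef
  set z : ℂ := Complex.exp (2 * (Real.pi : ℂ) * Complex.I * σ) with hzdef
  have hq0 : q ≠ 0 := Complex.exp_ne_zero _
  have hz0 : z ≠ 0 := Complex.exp_ne_zero _
  have hre : (2 * (Real.pi : ℂ) * Complex.I * τ).re = -(2 * Real.pi * τ.im) := by
    simp [Complex.mul_re, Complex.mul_im]
  have hq : ‖q‖ < 1 := by
    rw [hqdef, Complex.norm_exp, hre]
    rw [Real.exp_lt_one_iff]
    have := Real.pi_pos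
    nlinarith
  -- rewrite each summand
  have hsummand : ∀ k : ℤ,
      Complex.exp ((Real.pi : ℂ) * Complex.I * ((k : ℂ) + 1/2) ^ 2 * τ +
        2 * (Real.pi : ℂ) * Complex.I * ((k : ℂ) + 1/2) * σ) =
      (Complex.exp ((Real.pi : ℂ) * Complex.I * τ / 4) *
        Complex.exp ((Real.pi : ℂ) * Complex.I * σ)) * (q ^ JTP.T k * z ^ k) := by
    intro k
    have h2T : (2 : ℂ) * ((JTP.T k : ℤ) : ℂ) = (k : ℂ) ^ 2 + (k : ℂ) := by
      have h := JTP.two_T k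
      have h' : ((2 * JTP.T k : ℤ) : ℂ) = (((k * (k + 1)) : ℤ) : ℂ) := by rw [h]
      push_cast at h'
      linear_combination h'
    have hexp : (Real.pi : ℂ) * Complex.I * ((k : ℂ) + 1/2) ^ 2 * τ +
        2 * (Real.pi : ℂ) * Complex.I * ((k : ℂ) + 1/2) * σ =
        (((JTP.T k : ℤ) : ℂ) * (2 * (Real.pi : ℂ) * Complex.I * τ) +
          ((k : ℤ) : ℂ) * (2 * (Real.pi : ℂ) * Complex.I * σ)) +
          ((Real.pi : ℂ) * Complex.I * τ / 4 + (Real.pi : ℂ) * Complex.I * σ) := by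
      linear_combination (-((Real.pi : ℂ) * Complex.I * τ)) * h2T
    rw [hexp, Complex.exp_add, Complex.exp_add, Complex.exp_add,
      Complex.exp_int_mul, Complex.exp_int_mul]
    push_cast
    ring
  rw [tsum_congr hsummand, tsum_mul_left, JTP.core_s8 hq hq0 hz0]
  have hz1 : z⁻¹ = Complex.exp (-(2 * (Real.pi : ℂ) * Complex.I * σ)) := by
    rw [hzdef, ← Complex.exp_neg]
  have hx : Complex.exp ((Real.pi : ℂ) * Complex.I * σ) *
      Complex.exp (-(2 * (Real.pi : ℂ) * Complex.I * σ)) =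
      Complex.exp (-((Real.pi : ℂ) * Complex.I * σ)) := by
    rw [← Complex.exp_add]
    congr 1
    ring
  have h8 : Complex.exp (2 * (Real.pi : ℂ) * Complex.I * τ / 8) =
      Complex.exp ((Real.pi : ℂ) * Complex.I * τ / 4) := by
    congr 1
    ring
  rw [h8]
  have hx2 : Complex.exp ((Real.pi : ℂ) * Complex.I * σ) * z⁻¹ =
      Complex.exp (-((Real.pi : ℂ) * Complex.I * σ)) := by rw [hz1]; exact hx
  linear_combination Complex.exp ((Real.pi : ℂ) * Complex.I * τ / 4) *
    (∏' m : ℕ, ((1 - q ^ (m + 1)) * (1 + z * q ^ (m + 1)) * (1 + z⁻¹ * q ^ (m + 1)))) * hx2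
end
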